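/- Let A be a Leibniz algebra with product ∘ and let N : A → A be a linear map. Then the contracted product ∘_N satisfies the Leibniz Jacobi identity if and only if the Nijenhuis torsion Tor_N is a Leibniz 2-cocycle, i.e. for all X, Y, Z: Tor_N(X, Y∘Z) − Tor_N(X∘Y, Z) − Tor_N(Y, X∘Z) − Tor_N(X,Y)∘Z + X∘Tor_N(Y,Z) − Y∘Tor_N(X,Z) = 0. -/
import Mathlib

/-- For a Leibniz algebra `(A, ∘)` and a linear map `N`, the
contracted product `∘_N` satisfies the Leibniz Jacobi identity if and only if
the Nijenhuis torsion of `N` is a Leibniz 2-cocycle. -/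
theorem contracted_leibniz_iff_torsion_cocycle
    {K A : Type*} [Field K] [AddCommGroup A] [Module K A]
    (m : A →ₗ[K] A →ₗ[K] A) (N : A →ₗ[K] A)
    (jacobi : ∀ X Y Z : A, m (m X Y) Z = m X (m Y Z) - m Y (m X Z))
    (cN : A → A → A)
    (hcN : ∀ X Y : A, cN X Y = m (N X) Y + m X (N Y) - N (m X Y))
    (Tor : A → A → A)
    (hTor : ∀ X Y : A, Tor X Y = m (N X) (N Y) - N (cN X Y)) :
    (∀ X Y Z : A, cN (cN X Y) Z = cN X (cN Y Z) - cN Y (cN X Z)) ↔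
    (∀ X Y Z : A,
      Tor X (m Y Z) - Tor (m X Y) Z - Tor Y (m X Z)
        - m (Tor X Y) Z + m X (Tor Y Z) - m Y (Tor X Z) = 0) := by
  have key : ∀ X Y Z : A,
      Tor X (m Y Z) - Tor (m X Y) Z - Tor Y (m X Z)
        - m (Tor X Y) Z + m X (Tor Y Z) - m Y (Tor X Z)
      = cN (cN X Y) Z - (cN X (cN Y Z) - cN Y (cN X Z)) := by
    intro X Y Z
    simp only [hTor, hcN, map_add, map_sub, LinearMap.add_apply, LinearMap.sub_apply,
      jacobi]
    abel
  constructor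
  · intro h X Y Z
    rw [key, h, sub_self]
  · intro h X Y Z
    have := key X Y Z
    rw [h] at this
    exact sub_eq_zero.mp this.symm
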